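/- Let S be a posemigroup, Q a quantale, and f: S → Q a closure-preserving posemigroup morphism that is also an order embedding. Then the unique quantale morphism g: Q(S) → Q with g ∘ τ = f (where τ(s) = s↓ and g(D) = ⋁f(D)) is also an order embedding. -/

import Mathlib

open Pointwise

/-- The closure `D̄` of a subset of a posemigroup, with `b, c` ranging over `S¹`
(the four cases correspond to `b = c = 1`, `c = 1`, `b = 1`, and `b, c ∈ S`). -/
def pcl (S : Type*) [Semigroup S] [PartialOrder S] (D : Set S) : Set S :=
  {x | ∀ a : S,
    ((∀ d ∈ D, d ≤ a) → x ≤ a) ∧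
    (∀ b : S, (∀ d ∈ D, b * d ≤ a) → b * x ≤ a) ∧
    (∀ c : S, (∀ d ∈ D, d * c ≤ a) → x * c ≤ a) ∧
    (∀ b c : S, (∀ d ∈ D, b * d * c ≤ a) → b * x * c ≤ a)}

/-- A marked quantale structure on a posemigroup `S`: a marking (set of admissible
subsets) containing singletons and closed under translations by elements of `S¹`,
such that every admissible set has a join over which multiplication distributes. -/
structure MarkedQuantale (S : Type*) [Semigroup S] [PartialOrder S] : Type _ where
  mark : Set (Set S)
  singleton_mem : ∀ a : S, {a} ∈ mark
  mul_left_mem : ∀ G ∈ mark, ∀ a : S, (a * ·) '' G ∈ mark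
  mul_right_mem : ∀ G ∈ mark, ∀ b : S, (· * b) '' G ∈ mark
  mul_both_mem : ∀ G ∈ mark, ∀ a b : S, (fun x => a * x * b) '' G ∈ mark
  exists_lub : ∀ M ∈ mark, ∃ m : S, IsLUB M m
  lub_mul_left : ∀ M ∈ mark, ∀ m : S, IsLUB M m → ∀ a : S, IsLUB ((a * ·) '' M) (a * m)
  lub_mul_right : ∀ M ∈ mark, ∀ m : S, IsLUB M m → ∀ b : S, IsLUB ((· * b) '' M) (m * b)
  lub_mul_both : ∀ M ∈ mark, ∀ m : S, IsLUB M m → ∀ a b : S,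
    IsLUB ((fun x => a * x * b) '' M) (a * m * b)

/-- `D` is an `A`-ideal: a lower set closed under joins of its admissible subsets. -/
def IsAIdeal {S : Type*} [Semigroup S] [PartialOrder S] (A : Set (Set S)) (D : Set S) : Prop :=
  IsLowerSet D ∧ ∀ M ∈ A, M ⊆ D → ∀ m : S, IsLUB M m → m ∈ D

/-- If `f : S → Q` is a closure-preserving posemigroup morphism into a quantale which
is an order embedding, then the induced quantale morphism `g : Q(S) → Q`,
`g D = ⋁ f(D)`, is also an order embedding. -/
theorem stmt18 {S : Type*} [Semigroup S] [PartialOrder S]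
    [CovariantClass S S (· * ·) (· ≤ ·)]
    [CovariantClass S S (Function.swap (· * ·)) (· ≤ ·)]
    {Q : Type*} [Semigroup Q] [CompleteLattice Q] [IsQuantale Q]
    (f : S → Q) (hmul : ∀ a b : S, f (a * b) = f a * f b)
    (hcp : ∀ M : Set S, f '' pcl S ↑(lowerClosure M) ⊆ pcl Q ↑(lowerClosure (f '' M)))
    (hemb : ∀ a b : S, f a ≤ f b ↔ a ≤ b) :
    ∀ D E : {D : Set S // IsLowerSet D ∧ pcl S D = D},
      sSup (f '' (↑D : Set S)) ≤ sSup (f '' (↑E : Set S)) ↔ D ≤ E := by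
  intro D E
  constructor
  · intro h
    show (D : Set S) ⊆ (E : Set S)
    intro x hx
    have hfx : f x ≤ sSup (f '' (↑E : Set S)) :=
      le_trans (le_sSup (Set.mem_image_of_mem f hx)) h
    -- show x ∈ pcl S E
    have hxE : x ∈ pcl S (E : Set S) := by
      intro a
      have hE1 : ∀ a : S, (∀ d ∈ (E : Set S), f d ≤ f a) → sSup (f '' (↑E : Set S)) ≤ f a := by
        intro a ha
        apply sSup_le
        rintro _ ⟨d, hd, rfl⟩
        exact ha d hd
      refine ⟨?_, ?_, ?_, ?_⟩
      · intro hd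
        exact (hemb x a).mp (le_trans hfx (hE1 a fun d hd' => (hemb d a).mpr (hd d hd')))
      · intro b hd
        have : f b * sSup (f '' (↑E : Set S)) ≤ f a := by
          rw [mul_sSup_distrib]
          apply iSup₂_le
          rintro _ ⟨d, hd', rfl⟩
          rw [← hmul]; exact (hemb _ _).mpr (hd d hd')
        have h2 : f (b * x) ≤ f a := by
          rw [hmul]
          exact le_trans (mul_le_mul_right hfx _) this
        exact (hemb _ _).mp h2
      · intro c hd
        have : sSup (f '' (↑E : Set S)) * f c ≤ f a := by
          rw [sSup_mul_distrib]
          apply iSup₂_le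
          rintro _ ⟨d, hd', rfl⟩
          rw [← hmul]; exact (hemb _ _).mpr (hd d hd')
        have h2 : f (x * c) ≤ f a := by
          rw [hmul]
          exact le_trans (mul_le_mul_left hfx _) this
        exact (hemb _ _).mp h2
      · intro b c hd
        have : f b * sSup (f '' (↑E : Set S)) * f c ≤ f a := by
          have h3 : sSup (f '' (↑E : Set S)) * f c = sSup ((· * f c) '' (f '' (↑E : Set S))) := by
            rw [sSup_mul_distrib, sSup_image]
          rw [mul_assoc, h3, mul_sSup_distrib]
          apply iSup₂_le
          rintro _ ⟨_, ⟨d, hd', rfl⟩, rfl⟩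
          rw [← mul_assoc, ← hmul, ← hmul]
          exact (hemb _ _).mpr (hd d hd')
        have h2 : f (b * x * c) ≤ f a := by
          rw [hmul, hmul]
          exact le_trans (mul_le_mul_left (mul_le_mul_right hfx _) _) this
        exact (hemb _ _).mp h2
    rw [E.2.2] at hxE
    exact hxE
  · intro h
    exact sSup_le_sSup (Set.image_mono (f := f) h)
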